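/- For every n ≥ 3 congruent to 1 modulo 6, there exists a disc triangulation contained in the triangular lattice (a convex hexagon with side lengths (k, k+2, k+1, k+1, k+1, k+2) where n = 6k+7) with n boundary vertices, all internal vertices of degree 6, and exactly ⌊(n+3)²/12⌋ vertices. -/

import Mathlib

open scoped Classical

/-- A combinatorial disc triangulation with `V` vertices and boundary a simple
cycle with `n` vertices (given as an `n`-periodic cyclic sequence `bd`):
all bounded faces are triangles, every boundary edge lies in exactly one face
and every other edge lies in exactly two faces. -/
structure DiscTriangulation (V n : ℕ) where
  hn : 3 ≤ n
  hVn : n ≤ V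
  G : SimpleGraph (Fin V)
  bd : ℕ → Fin V
  bd_periodic : ∀ i, bd (i + n) = bd i
  bd_inj : ∀ i < n, ∀ j < n, bd i = bd j → i = j
  bd_adj : ∀ i, G.Adj (bd i) (bd (i + 1))
  faces : Finset (Finset (Fin V))
  face_card : ∀ f ∈ faces, f.card = 3
  face_clique : ∀ f ∈ faces, ∀ u ∈ f, ∀ v ∈ f, u ≠ v → G.Adj u v
  bedge_one : ∀ u v : Fin V, G.Adj u v →
    (∃ i, ({bd i, bd (i + 1)} : Finset (Fin V)) = {u, v}) →
    (faces.filter fun f => u ∈ f ∧ v ∈ f).card = 1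
  iedge_two : ∀ u v : Fin V, G.Adj u v →
    (¬ ∃ i, ({bd i, bd (i + 1)} : Finset (Fin V)) = {u, v}) →
    (faces.filter fun f => u ∈ f ∧ v ∈ f).card = 2

namespace DiscTriangulation

variable {V n : ℕ} (T : DiscTriangulation V n)

/-- The set of boundary vertices. -/
noncomputable def boundarySet : Finset (Fin V) := (Finset.range n).image T.bd

/-- `u v` span an edge of the boundary cycle. -/
def IsBoundaryEdge (u v : Fin V) : Prop :=
  ∃ i, ({T.bd i, T.bd (i + 1)} : Finset (Fin V)) = {u, v}

/-- A vertex is internal if it is not on the boundary cycle. -/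
def Internal (v : Fin V) : Prop := v ∉ T.boundarySet

/-- The degree of a vertex. -/
noncomputable def degree (v : Fin V) : ℕ := {u | T.G.Adj v u}.ncard

/-- The number of edges. -/
noncomputable def edgeCount : ℕ := T.G.edgeSet.ncard

/-- The number of (bounded) faces. -/
noncomputable def faceCount : ℕ := T.faces.card

/-- The number of pairs `(e, v)` where `e` is an internal edge and `v` is an
endpoint of `e` lying on the boundary (so an internal edge with both endpoints
on the boundary is counted twice); counted here as ordered pairs `(v, u)`
with `v` on the boundary. -/
noncomputable def m : ℕ :=
  {p : Fin V × Fin V |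
    T.G.Adj p.1 p.2 ∧ p.1 ∈ T.boundarySet ∧ ¬ T.IsBoundaryEdge p.1 p.2}.ncard

/-- The sum of degrees of internal vertices, i.e. `σ · (V - n)` where `σ` is
the average internal degree. -/
noncomputable def internalDegreeSum : ℕ :=
  ∑ v ∈ Finset.univ.filter (fun v => T.Internal v), T.degree v

/-- The faces surviving after stripping the boundary layer: those with all
three vertices internal. -/
noncomputable def strippedFaces : Finset (Finset (Fin V)) :=
  T.faces.filter fun f => ∀ v ∈ f, T.Internal v

/-- The total boundary length `n'` of the stripped triangulation, with bridges
counted twice: each edge between internal vertices contributes `2 - c`, where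
`c ≤ 2` is the number of stripped faces containing it. -/
noncomputable def strippedBoundary : ℕ :=
  ∑ e ∈ Finset.univ.filter
      (fun e : Finset (Fin V) => e.card = 2 ∧ (∀ v ∈ e, T.Internal v) ∧
        ∀ u ∈ e, ∀ v ∈ e, u ≠ v → T.G.Adj u v),
    (2 - (T.strippedFaces.filter fun f => e ⊆ f).card)

/-- Number of boundary vertices of a face. -/
noncomputable def bvCount (f : Finset (Fin V)) : ℕ := (f ∩ T.boundarySet).card

/-- Number of boundary edges of a face. -/
noncomputable def beCount (f : Finset (Fin V)) : ℕ :=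
  ((Finset.range n).filter fun i => T.bd i ∈ f ∧ T.bd (i + 1) ∈ f).card

/-- `α`: faces with a boundary edge and an internal vertex. -/
noncomputable def alphaCount : ℕ :=
  (T.faces.filter fun f => T.bvCount f = 2 ∧ T.beCount f = 1).card

/-- `γ`: faces with two boundary vertices, one internal vertex, and no
boundary edge. -/
noncomputable def gammaCount : ℕ :=
  (T.faces.filter fun f => T.bvCount f = 2 ∧ T.beCount f = 0).card

/-- `β i`: faces with three boundary vertices and `i` boundary edges. -/
noncomputable def betaCount (i : ℕ) : ℕ :=
  (T.faces.filter fun f => T.bvCount f = 3 ∧ T.beCount f = i).card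

end DiscTriangulation

/-- The triangular lattice: the 6-regular triangulation of the plane, with
vertex set `ℤ × ℤ` and edges given by the difference vectors
`(1,0)`, `(0,1)`, `(1,1)` and their negatives. -/
def TriLattice : SimpleGraph (ℤ × ℤ) :=
  SimpleGraph.fromRel fun p q =>
    (p.1 - q.1 = 1 ∧ p.2 = q.2) ∨ (p.1 = q.1 ∧ p.2 - q.2 = 1) ∨
    (p.1 - q.1 = 1 ∧ p.2 - q.2 = 1)

lemma adj_iff (p q : ℤ × ℤ) : TriLattice.Adj p q ↔
    ((p.1-q.1=1∧p.2=q.2) ∨ (p.1-q.1=-1∧p.2=q.2) ∨ (p.1=q.1∧p.2-q.2=1) ∨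
     (p.1=q.1∧p.2-q.2=-1) ∨ (p.1-q.1=1∧p.2-q.2=1) ∨ (p.1-q.1=-1∧p.2-q.2=-1)) := by
  obtain ⟨a,b⟩ := p; obtain ⟨c,d⟩ := q
  simp only [TriLattice, SimpleGraph.fromRel_adj, ne_eq, Prod.mk.injEq, not_and]
  constructor
  · rintro ⟨h, h2⟩; omega
  · intro h; omega

def inH (k : ℕ) (p : ℤ × ℤ) : Prop :=
  (k:ℤ) ≤ p.1 ∧ p.1 ≤ 3*k+3 ∧ 0 ≤ p.2 ∧ p.2 ≤ 2*k+2 ∧ p.2 ≤ p.1 ∧ p.1 - p.2 ≤ 2*k+2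

instance (k : ℕ) : DecidablePred (inH k) := fun p => by unfold inH; infer_instance

noncomputable def HF (k : ℕ) : Finset (ℤ × ℤ) :=
  (Finset.Icc ((k:ℤ), (0:ℤ)) ((3*k+3 : ℤ), (2*k+2:ℤ))).filter (inH k)

lemma mem_HF {k : ℕ} {p : ℤ × ℤ} : p ∈ HF k ↔ inH k p := by
  simp only [HF, Finset.mem_filter, Finset.mem_Icc, Prod.le_def, inH, and_iff_right_iff_imp]
  intro h; omega

def bdZ (k i : ℕ) : ℤ × ℤ :=
  if i ≤ k+2 then ((k:ℤ)+i, 0)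
  else if i ≤ 2*k+3 then ((k:ℤ)+i, (i:ℤ)-(k+2))
  else if i ≤ 3*k+4 then (3*(k:ℤ)+3, (i:ℤ)-(k+2))
  else if i ≤ 4*k+5 then (6*(k:ℤ)+7-i, 2*k+2)
  else if i ≤ 5*k+7 then (6*(k:ℤ)+7-i, 6*(k:ℤ)+7-i)
  else ((k:ℤ), 6*(k:ℤ)+7-i)

def onB (k : ℕ) (p : ℤ × ℤ) : Prop :=
  inH k p ∧ (p.1 = k ∨ p.1 = 3*k+3 ∨ p.2 = 0 ∨ p.2 = 2*k+2 ∨ p.2 = p.1 ∨ p.1 - p.2 = 2*k+2)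

lemma bdZ_onB {k i : ℕ} (h : i ≤ 6*k+7) : onB k (bdZ k i) := by
  unfold bdZ onB inH
  split_ifs <;> dsimp only <;> omega

def rIdx (k : ℕ) (p : ℤ × ℤ) : ℕ :=
  (if p.2 = 0 then p.1 - k
   else if p.1 - p.2 = 2*k+2 ∨ p.1 = 3*k+3 then k+2+p.2
   else if p.2 = 2*k+2 ∨ p.2 = p.1 then 6*k+7-p.1
   else 6*k+7-p.2).toNat

lemma rIdx_bdZ {k i : ℕ} (h : i < 6*k+7) : rIdx k (bdZ k i) = i := by
  unfold bdZ rIdx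
  split_ifs <;> dsimp only at * <;> omega

lemma bdZ_rIdx {k : ℕ} {p : ℤ × ℤ} (h : onB k p) : bdZ k (rIdx k p) = p ∧ rIdx k p < 6*k+7 := by
  obtain ⟨⟨h1,h2,h3,h4,h5,h6⟩, ht⟩ := h
  obtain ⟨x, y⟩ := p
  dsimp only at *
  unfold rIdx bdZ
  split_ifs <;> simp only [Prod.mk.injEq] <;> dsimp only at * <;> omega

/-- inner flank of directed edge u→v -/
def w1 (u v : ℤ × ℤ) : ℤ × ℤ := (u.2 + v.1 - v.2, u.2 + v.1 - u.1)
/-- outer flank of directed edge u→v -/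
def w2 (u v : ℤ × ℤ) : ℤ × ℤ := (u.1 + v.2 - u.2, u.1 + v.2 - v.1)

lemma cn_char {u v : ℤ × ℤ} (h : TriLattice.Adj u v) (z : ℤ × ℤ) :
    (TriLattice.Adj u z ∧ TriLattice.Adj v z) ↔ (z = w1 u v ∨ z = w2 u v) := by
  obtain ⟨a,b⟩ := u; obtain ⟨c,d⟩ := v; obtain ⟨x,y⟩ := z
  rw [adj_iff] at h
  rw [adj_iff, adj_iff, Prod.ext_iff, Prod.ext_iff]
  unfold w1 w2
  dsimp only at *
  rcases h with ⟨h1,h2⟩|⟨h1,h2⟩|⟨h1,h2⟩|⟨h1,h2⟩|⟨h1,h2⟩|⟨h1,h2⟩ <;> omega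

lemma w1_ne_w2 {u v : ℤ × ℤ} (h : TriLattice.Adj u v) : w1 u v ≠ w2 u v := by
  obtain ⟨a,b⟩ := u; obtain ⟨c,d⟩ := v
  rw [adj_iff] at h
  unfold w1 w2
  simp only [ne_eq, Prod.mk.injEq, not_and]
  dsimp only at *
  omega

lemma w2_swap (u v : ℤ × ℤ) : w2 v u = w1 u v := by
  simp only [w1, w2, Prod.mk.injEq]
  constructor <;> ring

lemma bdZ_junction (k : ℕ) : bdZ k (6*k+7) = bdZ k 0 := by
  unfold bdZ
  split_ifs <;> simp only [Prod.mk.injEq] <;> omega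

lemma bdZ_step_adj {k j : ℕ} (h : j < 6*k+7) : TriLattice.Adj (bdZ k j) (bdZ k (j+1)) := by
  unfold bdZ
  split_ifs <;> rw [adj_iff] <;> dsimp only <;> omega

lemma bedge_flanks {k j : ℕ} (h : j < 6*k+7) :
    inH k (w1 (bdZ k j) (bdZ k (j+1))) ∧ ¬ inH k (w2 (bdZ k j) (bdZ k (j+1))) := by
  unfold bdZ w1 w2 inH
  split_ifs <;> dsimp only <;> omega

lemma outer_flank_out {k : ℕ} {u v : ℤ × ℤ} (hu : inH k u) (hv : inH k v)
    (h : TriLattice.Adj u v) (hw : ¬ inH k (w2 u v)) :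
    ∃ j, j < 6*k+7 ∧ bdZ k j = u ∧ bdZ k (j+1) = v := by
  obtain ⟨a,b⟩ := u; obtain ⟨c,d⟩ := v
  rw [adj_iff] at h
  unfold inH at hu hv hw
  unfold w2 at hw
  dsimp only at *
  rcases h with ⟨h1,h2⟩|⟨h1,h2⟩|⟨h1,h2⟩|⟨h1,h2⟩|⟨h1,h2⟩|⟨h1,h2⟩
  · -- c = a-1, d = b : side 4, b = 2k+2
    refine ⟨(6*(k:ℤ)+7-a).toNat, by omega, ?_, ?_⟩ <;>
      · unfold bdZ; split_ifs <;> simp only [Prod.mk.injEq] <;> omega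
  · -- c = a+1, d = b : side 1, b = 0
    refine ⟨(a-(k:ℤ)).toNat, by omega, ?_, ?_⟩ <;>
      · unfold bdZ; split_ifs <;> simp only [Prod.mk.injEq] <;> omega
  · -- c = a, d = b-1 : side 6, a = k
    refine ⟨(6*(k:ℤ)+7-b).toNat, by omega, ?_, ?_⟩ <;>
      · unfold bdZ; split_ifs <;> simp only [Prod.mk.injEq] <;> omega
  · -- c = a, d = b+1 : side 3, a = 3k+3
    refine ⟨((k:ℤ)+2+b).toNat, by omega, ?_, ?_⟩ <;>
      · unfold bdZ; split_ifs <;> simp only [Prod.mk.injEq] <;> omega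
  · -- c = a-1, d = b-1 : side 5, a = b
    refine ⟨(6*(k:ℤ)+7-a).toNat, by omega, ?_, ?_⟩ <;>
      · unfold bdZ; split_ifs <;> simp only [Prod.mk.injEq] <;> omega
  · -- c = a+1, d = b+1 : side 2, a - b = 2k+2
    refine ⟨((k:ℤ)+2+b).toNat, by omega, ?_, ?_⟩ <;>
      · unfold bdZ; split_ifs <;> simp only [Prod.mk.injEq] <;> omega

lemma interior_nbrs {k : ℕ} {p : ℤ × ℤ} (hp : inH k p) (hb : ¬ onB k p) :
    (HF k).filter (fun z => TriLattice.Adj p z) =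
      {(p.1+1,p.2),(p.1-1,p.2),(p.1,p.2+1),(p.1,p.2-1),(p.1+1,p.2+1),(p.1-1,p.2-1)} := by
  unfold onB at hb
  ext z
  simp only [Finset.mem_filter, mem_HF, adj_iff, Finset.mem_insert, Finset.mem_singleton,
    Prod.ext_iff, inH] at *
  omega

lemma nbhd_card (a b : ℤ) :
    ({(a+1,b),(a-1,b),(a,b+1),(a,b-1),(a+1,b+1),(a-1,b-1)} : Finset (ℤ×ℤ)).card = 6 := by
  rw [Finset.card_insert_of_notMem (by simp [Prod.ext_iff]; omega),
      Finset.card_insert_of_notMem (by simp [Prod.ext_iff]; omega),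
      Finset.card_insert_of_notMem (by simp [Prod.ext_iff]; omega),
      Finset.card_insert_of_notMem (by simp [Prod.ext_iff]; omega),
      Finset.card_insert_of_notMem (by simp [Prod.ext_iff]; omega),
      Finset.card_singleton]

def Bset (k : ℕ) : Finset (ℤ×ℤ) := (Finset.range (6*k+7)).image (bdZ k)

lemma mem_Bset {k : ℕ} {p : ℤ×ℤ} : p ∈ Bset k ↔ onB k p := by
  unfold Bset
  simp only [Finset.mem_image, Finset.mem_range]
  constructor
  · rintro ⟨i, hi, rfl⟩; exact bdZ_onB (le_of_lt hi)
  · intro h; exact ⟨rIdx k p, (bdZ_rIdx h).2, (bdZ_rIdx h).1⟩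

lemma card_Bset (k : ℕ) : (Bset k).card = 6*k+7 := by
  unfold Bset
  rw [Finset.card_image_of_injOn, Finset.card_range]
  intro i hi j hj hij
  simp only [Finset.coe_range, Set.mem_Iio] at hi hj
  have h1 := rIdx_bdZ (k := k) hi
  have h2 := rIdx_bdZ (k := k) hj
  rw [hij, h2] at h1
  exact h1.symm

lemma card_HF : ∀ k, (HF k).card = 3*k^2+10*k+8
  | 0 => by decide
  | (k+1) => by
    have hinj : Function.Injective (fun p : ℤ×ℤ => (p.1+2, p.2+1)) := by
      intro p q h
      simp only [Prod.mk.injEq] at h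
      exact Prod.ext (by omega) (by omega)
    have hsplit : HF (k+1) = Bset (k+1) ∪ (HF k).image (fun p => (p.1+2, p.2+1)) := by
      ext ⟨x, y⟩
      simp only [Finset.mem_union, mem_Bset, Finset.mem_image, mem_HF]
      constructor
      · intro hp
        by_cases hb : onB (k+1) (x, y)
        · exact Or.inl hb
        · refine Or.inr ⟨(x-2, y-1), ?_, ?_⟩
          · unfold onB inH at *
            push_cast at *
            try dsimp only at *
            omega
          · simp only [Prod.mk.injEq]
            constructor <;> ring
      · rintro (h | ⟨⟨a, b⟩, hq, hab⟩)
        · exact h.1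
        · unfold inH at *
          simp only [Prod.mk.injEq] at hab
          push_cast at *
          try dsimp only at *
          omega
    have hdisj : Disjoint (Bset (k+1)) ((HF k).image (fun p => (p.1+2, p.2+1))) := by
      rw [Finset.disjoint_left]
      intro p hp hq
      rw [mem_Bset] at hp
      simp only [Finset.mem_image, mem_HF] at hq
      obtain ⟨q, hq, rfl⟩ := hq
      unfold onB inH at *; push_cast at *; try dsimp only at *
      omega
    rw [hsplit, Finset.card_union_of_disjoint hdisj, card_Bset,
      Finset.card_image_of_injective _ hinj, card_HF k]
    ring

noncomputable def eqvH (k : ℕ) : {x // x ∈ HF k} ≃ Fin (3*k^2+10*k+8) :=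
  (HF k).equivFinOfCardEq (card_HF k)

noncomputable def φh (k : ℕ) (v : Fin (3*k^2+10*k+8)) : ℤ × ℤ := ((eqvH k).symm v : ℤ × ℤ)

lemma φh_mem (k : ℕ) (v : Fin (3*k^2+10*k+8)) : φh k v ∈ HF k := ((eqvH k).symm v).2

lemma φh_inj (k : ℕ) : Function.Injective (φh k) :=
  fun _ _ h => (eqvH k).symm.injective (Subtype.ext h)

lemma φh_eqv (k : ℕ) (z : ℤ×ℤ) (hz : z ∈ HF k) : φh k (eqvH k ⟨z, hz⟩) = z := by
  unfold φh; rw [Equiv.symm_apply_apply]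

lemma eqv_φh (k : ℕ) (v : Fin (3*k^2+10*k+8)) (h : φh k v ∈ HF k) : eqvH k ⟨φh k v, h⟩ = v := by
  have : (⟨φh k v, h⟩ : {x // x ∈ HF k}) = (eqvH k).symm v := Subtype.ext rfl
  rw [this, Equiv.apply_symm_apply]

noncomputable def Gh (k : ℕ) : SimpleGraph (Fin (3*k^2+10*k+8)) := TriLattice.comap (φh k)

lemma Gh_adj {k : ℕ} {u v : Fin (3*k^2+10*k+8)} :
    (Gh k).Adj u v ↔ TriLattice.Adj (φh k u) (φh k v) := Iff.rfl

noncomputable def bdh (k : ℕ) (i : ℕ) : Fin (3*k^2+10*k+8) :=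
  eqvH k ⟨bdZ k (i % (6*k+7)),
    mem_HF.mpr (bdZ_onB (le_of_lt (Nat.mod_lt _ (by omega)))).1⟩

lemma φh_bdh (k i : ℕ) : φh k (bdh k i) = bdZ k (i % (6*k+7)) := by
  unfold bdh; rw [φh_eqv]

lemma bdZ_succ_mod (k i : ℕ) :
    bdZ k ((i+1) % (6*k+7)) = bdZ k (i % (6*k+7) + 1) := by
  have e : (i+1) % (6*k+7) = (i % (6*k+7) + 1) % (6*k+7) := (Nat.mod_add_mod i (6*k+7) 1).symm
  rw [e]
  by_cases h : i % (6*k+7) + 1 < 6*k+7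
  · rw [Nat.mod_eq_of_lt h]
  · have hlt : i % (6*k+7) < 6*k+7 := Nat.mod_lt _ (by omega)
    have h2 : i % (6*k+7) + 1 = 6*k+7 := by omega
    rw [h2, Nat.mod_self]
    exact (bdZ_junction k).symm

noncomputable def facesh (k : ℕ) : Finset (Finset (Fin (3*k^2+10*k+8))) :=
  Finset.univ.filter (fun f => f.card = 3 ∧ ∀ u ∈ f, ∀ v ∈ f, u ≠ v → (Gh k).Adj u v)

lemma triple_clique {α : Type*} {G : SimpleGraph α} [DecidableEq α] {a b c : α}
    (hab : G.Adj a b) (hac : G.Adj a c) (hbc : G.Adj b c) :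
    ∀ u ∈ ({a,b,c} : Finset α), ∀ v ∈ ({a,b,c} : Finset α), u ≠ v → G.Adj u v := by
  intro x hx y hy hxy
  simp only [Finset.mem_insert, Finset.mem_singleton] at hx hy
  rcases hx with rfl|rfl|rfl <;> rcases hy with rfl|rfl|rfl <;>
    first
      | exact absurd rfl hxy
      | assumption
      | exact hab.symm
      | exact hac.symm
      | exact hbc.symm

lemma triple_card {α : Type*} [DecidableEq α] {a b c : α} (h1 : a ≠ b) (h2 : a ≠ c)
    (h3 : b ≠ c) : ({a,b,c} : Finset α).card = 3 := by
  rw [Finset.card_insert_of_notMem (by simp [h1, h2]),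
    Finset.card_insert_of_notMem (by simp [h3]), Finset.card_singleton]

lemma pair_eq {α : Type*} [DecidableEq α] {a b c d : α} (hab : a ≠ b)
    (h : ({a,b} : Finset α) = {c,d}) : (a = c ∧ b = d) ∨ (a = d ∧ b = c) := by
  have ha : a ∈ ({c,d} : Finset α) := by rw [← h]; simp
  have hb : b ∈ ({c,d} : Finset α) := by rw [← h]; simp
  simp only [Finset.mem_insert, Finset.mem_singleton] at ha hb
  rcases ha with ha|ha <;> rcases hb with hb|hb
  · exact absurd (ha.trans hb.symm) hab
  · exact Or.inl ⟨ha, hb⟩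
  · exact Or.inr ⟨ha, hb⟩
  · exact absurd (ha.trans hb.symm) hab

set_option maxHeartbeats 1600000 in
lemma faces_filter_card (k : ℕ) {u v : Fin (3*k^2+10*k+8)} (huv : (Gh k).Adj u v) :
    ((facesh k).filter fun f => u ∈ f ∧ v ∈ f).card =
      ((HF k).filter (fun z => TriLattice.Adj (φh k u) z ∧ TriLattice.Adj (φh k v) z)).card := by
  symm
  apply Finset.card_bij (fun z hz => insert u (insert v
    ({eqvH k ⟨z, (Finset.mem_filter.mp hz).1⟩} : Finset (Fin (3*k^2+10*k+8)))))
  · intro z hz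
    obtain ⟨hzH, hz1, hz2⟩ := Finset.mem_filter.mp hz
    set w := eqvH k ⟨z, hzH⟩ with hwdef
    have hφw : φh k w = z := φh_eqv k z hzH
    have hwu : w ≠ u := fun e => hz1.ne (by rw [← hφw, e])
    have hwv : w ≠ v := fun e => hz2.ne (by rw [← hφw, e])
    have hu_w : (Gh k).Adj u w := by rw [Gh_adj, hφw]; exact hz1
    have hv_w : (Gh k).Adj v w := by rw [Gh_adj, hφw]; exact hz2
    refine Finset.mem_filter.mpr ⟨Finset.mem_filter.mpr ⟨Finset.mem_univ _, ?_, ?_⟩,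
      by simp, by simp⟩
    · exact triple_card huv.ne (Ne.symm hwu) (Ne.symm hwv)
    · exact triple_clique huv hu_w hv_w
  · intro z1 h1 z2 h2 heq
    obtain ⟨hz1H, hz11, hz12⟩ := Finset.mem_filter.mp h1
    obtain ⟨hz2H, hz21, hz22⟩ := Finset.mem_filter.mp h2
    have hmem : eqvH k ⟨z1, hz1H⟩ ∈ insert u (insert v
        ({eqvH k ⟨z2, hz2H⟩} : Finset (Fin (3*k^2+10*k+8)))) := by
      rw [← heq]; simp
    have hφ1 : φh k (eqvH k ⟨z1, hz1H⟩) = z1 := φh_eqv k z1 hz1H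
    simp only [Finset.mem_insert, Finset.mem_singleton] at hmem
    rcases hmem with he|he|he
    · exact absurd (by rw [← he]; exact hφ1) hz11.ne
    · exact absurd (by rw [← he]; exact hφ1) hz12.ne
    · have := congrArg (φh k) he
      rw [hφ1, φh_eqv] at this
      exact this
  · intro f hf
    obtain ⟨hface, hu, hv⟩ := Finset.mem_filter.mp hf
    obtain ⟨-, hcard, hclique⟩ := Finset.mem_filter.mp hface
    have hsub : ({u, v} : Finset (Fin (3*k^2+10*k+8))) ⊆ f := by
      intro x hx
      simp only [Finset.mem_insert, Finset.mem_singleton] at hx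
      rcases hx with rfl|rfl <;> assumption
    have hcard1 : (f \ {u,v}).card = 1 := by
      rw [Finset.card_sdiff_of_subset hsub, hcard, Finset.card_pair huv.ne]
    obtain ⟨w, hw⟩ := Finset.card_eq_one.mp hcard1
    have hwmem : w ∈ f \ ({u,v} : Finset (Fin (3*k^2+10*k+8))) := by
      rw [hw]; exact Finset.mem_singleton_self w
    rw [Finset.mem_sdiff] at hwmem
    obtain ⟨hwf, hwnot⟩ := hwmem
    simp only [Finset.mem_insert, Finset.mem_singleton, not_or] at hwnot
    have hadj_uw : (Gh k).Adj u w := hclique u hu w hwf (Ne.symm hwnot.1)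
    have hadj_vw : (Gh k).Adj v w := hclique v hv w hwf (Ne.symm hwnot.2)
    have hzmem : φh k w ∈ (HF k).filter
        (fun z => TriLattice.Adj (φh k u) z ∧ TriLattice.Adj (φh k v) z) :=
      Finset.mem_filter.mpr ⟨φh_mem k w, hadj_uw, hadj_vw⟩
    refine ⟨φh k w, hzmem, ?_⟩
    rw [eqv_φh k w]
    have hf_eq : f = {u, v, w} := by
      rw [← Finset.union_sdiff_of_subset hsub, hw]
      ext x
      simp only [Finset.mem_union, Finset.mem_insert, Finset.mem_singleton]
      tauto
    exact hf_eq.symm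

lemma CN_card_one {k : ℕ} {p q : ℤ×ℤ} (hadj : TriLattice.Adj p q)
    (h1 : inH k (w1 p q)) (h2 : ¬ inH k (w2 p q)) :
    ((HF k).filter (fun z => TriLattice.Adj p z ∧ TriLattice.Adj q z)).card = 1 := by
  have heq : (HF k).filter (fun z => TriLattice.Adj p z ∧ TriLattice.Adj q z) = {w1 p q} := by
    ext z
    simp only [Finset.mem_filter, mem_HF, Finset.mem_singleton, cn_char hadj]
    constructor
    · rintro ⟨hz, (rfl|rfl)⟩
      · rfl
      · exact absurd hz h2
    · rintro rfl; exact ⟨h1, Or.inl rfl⟩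
  rw [heq, Finset.card_singleton]

lemma CN_card_two {k : ℕ} {p q : ℤ×ℤ} (hadj : TriLattice.Adj p q)
    (h1 : inH k (w1 p q)) (h2 : inH k (w2 p q)) :
    ((HF k).filter (fun z => TriLattice.Adj p z ∧ TriLattice.Adj q z)).card = 2 := by
  have heq : (HF k).filter (fun z => TriLattice.Adj p z ∧ TriLattice.Adj q z)
      = {w1 p q, w2 p q} := by
    ext z
    simp only [Finset.mem_filter, mem_HF, Finset.mem_insert, Finset.mem_singleton, cn_char hadj]
    constructor
    · rintro ⟨hz, h⟩; exact h
    · rintro (rfl|rfl)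
      · exact ⟨h1, Or.inl rfl⟩
      · exact ⟨h2, Or.inr rfl⟩
  rw [heq, Finset.card_pair (w1_ne_w2 hadj)]

lemma hex_bedge (k : ℕ) (u v : Fin (3*k^2+10*k+8)) (huv : (Gh k).Adj u v)
    (hb : ∃ i, ({bdh k i, bdh k (i+1)} : Finset (Fin (3*k^2+10*k+8))) = {u, v}) :
    ((facesh k).filter fun f => u ∈ f ∧ v ∈ f).card = 1 := by
  obtain ⟨i, hi⟩ := hb
  have hjlt : i % (6*k+7) < 6*k+7 := Nat.mod_lt _ (by omega)
  have hadj := bdZ_step_adj hjlt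
  have hfl := bedge_flanks hjlt
  have h1 : φh k (bdh k i) = bdZ k (i % (6*k+7)) := φh_bdh k i
  have h2 : φh k (bdh k (i+1)) = bdZ k (i % (6*k+7) + 1) := by
    rw [φh_bdh, bdZ_succ_mod]
  have hne : bdh k i ≠ bdh k (i+1) := fun e => hadj.ne (by rw [← h1, ← h2, e])
  rw [faces_filter_card k huv]
  rcases pair_eq hne hi with ⟨e1, e2⟩ | ⟨e1, e2⟩
  · rw [← e1, ← e2, h1, h2]
    exact CN_card_one hadj hfl.1 hfl.2
  · rw [← e1, ← e2, h1, h2]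
    have hcomm : ∀ z ∈ HF k,
        (TriLattice.Adj (bdZ k (i % (6*k+7) + 1)) z ∧ TriLattice.Adj (bdZ k (i % (6*k+7))) z) ↔
        (TriLattice.Adj (bdZ k (i % (6*k+7))) z ∧ TriLattice.Adj (bdZ k (i % (6*k+7) + 1)) z) :=
      fun z _ => and_comm
    rw [Finset.filter_congr hcomm]
    exact CN_card_one hadj hfl.1 hfl.2

lemma hex_iedge (k : ℕ) (u v : Fin (3*k^2+10*k+8)) (huv : (Gh k).Adj u v)
    (hb : ¬ ∃ i, ({bdh k i, bdh k (i+1)} : Finset (Fin (3*k^2+10*k+8))) = {u, v}) :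
    ((facesh k).filter fun f => u ∈ f ∧ v ∈ f).card = 2 := by
  have hadj : TriLattice.Adj (φh k u) (φh k v) := huv
  have key : ∀ (a b : Fin (3*k^2+10*k+8)), (Gh k).Adj a b →
      ¬ inH k (w2 (φh k a) (φh k b)) →
      ∃ j, j < 6*k+7 ∧ bdh k j = a ∧ bdh k (j+1) = b := by
    intro a b hab hw
    obtain ⟨j, hjlt, hja, hjb⟩ := outer_flank_out (mem_HF.mp (φh_mem k a))
      (mem_HF.mp (φh_mem k b)) hab hw
    refine ⟨j, hjlt, ?_, ?_⟩
    · apply φh_inj k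
      rw [φh_bdh, Nat.mod_eq_of_lt hjlt, hja]
    · apply φh_inj k
      rw [φh_bdh, bdZ_succ_mod, Nat.mod_eq_of_lt hjlt, hjb]
  have h2 : inH k (w2 (φh k u) (φh k v)) := by
    by_contra hw
    obtain ⟨j, _, e1, e2⟩ := key u v huv hw
    exact hb ⟨j, by rw [e1, e2]⟩
  have h1 : inH k (w1 (φh k u) (φh k v)) := by
    rw [← w2_swap]
    by_contra hw
    obtain ⟨j, _, e1, e2⟩ := key v u huv.symm hw
    exact hb ⟨j, by rw [e1, e2]; exact Finset.pair_comm v u⟩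
  rw [faces_filter_card k huv]
  exact CN_card_two hadj h1 h2

lemma hex_deg (k : ℕ) (v : Fin (3*k^2+10*k+8))
    (hv : v ∉ (Finset.range (6*k+7)).image (bdh k)) :
    {u | (Gh k).Adj v u}.ncard = 6 := by
  have hmem := φh_mem k v
  have hnB : ¬ onB k (φh k v) := by
    intro hB
    obtain ⟨heq, hlt⟩ := bdZ_rIdx hB
    apply hv
    rw [Finset.mem_image]
    refine ⟨rIdx k (φh k v), Finset.mem_range.mpr hlt, ?_⟩
    apply φh_inj k
    rw [φh_bdh, Nat.mod_eq_of_lt hlt, heq]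
  have hset : {u | (Gh k).Adj v u} =
      ↑(Finset.univ.filter (fun u => (Gh k).Adj v u)) := by
    ext u; simp
  rw [hset, Set.ncard_coe_finset]
  have hbij : (Finset.univ.filter (fun u => (Gh k).Adj v u)).card
      = ((HF k).filter (fun z => TriLattice.Adj (φh k v) z)).card := by
    apply Finset.card_bij (fun u _ => φh k u)
    · intro a ha
      rw [Finset.mem_filter] at ha ⊢
      exact ⟨φh_mem k a, ha.2⟩
    · intro a _ b _ h
      exact φh_inj k h
    · intro z hz
      rw [Finset.mem_filter] at hz
      refine ⟨eqvH k ⟨z, hz.1⟩, ?_, φh_eqv k z hz.1⟩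
      rw [Finset.mem_filter]
      refine ⟨Finset.mem_univ _, ?_⟩
      show TriLattice.Adj (φh k v) (φh k (eqvH k ⟨z, hz.1⟩))
      rw [φh_eqv]
      exact hz.2
  rw [hbij, interior_nbrs (mem_HF.mp hmem) hnB, nbhd_card]

noncomputable def hexTri (k : ℕ) : DiscTriangulation (3*k^2+10*k+8) (6*k+7) where
  hn := by omega
  hVn := by nlinarith
  G := Gh k
  bd := bdh k
  bd_periodic := by
    intro i
    unfold bdh
    apply congrArg
    apply Subtype.ext
    show bdZ k ((i + (6*k+7)) % (6*k+7)) = bdZ k (i % (6*k+7))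
    rw [Nat.add_mod_right]
  bd_inj := by
    intro i hi j hj hij
    have hφ := congrArg (φh k) hij
    rw [φh_bdh, φh_bdh, Nat.mod_eq_of_lt hi, Nat.mod_eq_of_lt hj] at hφ
    have ri := rIdx_bdZ (k := k) hi
    have rj := rIdx_bdZ (k := k) hj
    rw [hφ, rj] at ri
    exact ri.symm
  bd_adj := by
    intro i
    show TriLattice.Adj (φh k (bdh k i)) (φh k (bdh k (i+1)))
    rw [φh_bdh, φh_bdh, bdZ_succ_mod]
    exact bdZ_step_adj (Nat.mod_lt _ (by omega))
  faces := facesh k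
  face_card := by
    intro f hf
    exact ((Finset.mem_filter.mp hf).2).1
  face_clique := by
    intro f hf
    exact ((Finset.mem_filter.mp hf).2).2
  bedge_one := hex_bedge k
  iedge_two := hex_iedge k

theorem hexagon_achieves_bound (k n : ℕ) (hn : n = 6 * k + 7) :
    ∃ T : DiscTriangulation ((n + 3) ^ 2 / 12) n,
      (∀ v, T.Internal v → T.degree v = 6) ∧
      ∃ φ : Fin ((n + 3) ^ 2 / 12) → ℤ × ℤ, Function.Injective φ ∧
        ∀ u v, T.G.Adj u v → TriLattice.Adj (φ u) (φ v) := by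
  subst hn
  have hV : (6 * k + 7 + 3) ^ 2 / 12 = 3*k^2+10*k+8 := by
    have h : (6 * k + 7 + 3) ^ 2 = 12*(3*k^2+10*k+8)+4 := by ring
    omega
  rw [hV]
  refine ⟨hexTri k, ?_, φh k, φh_inj k, fun u v h => h⟩
  intro v hv
  have hv' : v ∉ (Finset.range (6*k+7)).image (bdh k) := hv
  show {u | (hexTri k).G.Adj v u}.ncard = 6
  exact hex_deg k v hv'
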